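/- arXiv:0803.2853 — 3 statements merged into one kernel-verified Lean document; each statement's English description precedes it below -/
import Mathlib

section
/- Let A be a commutative ring that is an integral domain and an algebra over a commutative ring k, and let f, g ∈ A with f ≠ 0. Then the set of k-linear derivations D of A satisfying f·D(g) = g·D(f) is a Lie subalgebra of the Lie algebra of all k-linear derivations of A: it is closed under addition, under scalar multiplication by elements of k, and under the commutator bracket [R,S] = R∘S − S∘R. -/
/-- Let `A` be a commutative integral domain that is an algebra over a commutative
ring `k`, and let `f g : A` with `f ≠ 0`. Then the set of `k`-linear derivations `D`
of `A` satisfying `f·D(g) = g·D(f)` is a Lie subalgebra of the Lie algebra of all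
`k`-linear derivations of `A` (so it is closed under addition, under scalar
multiplication by elements of `k`, and under the commutator bracket). -/
theorem wronskian_lieSubalgebra (k A : Type*) [CommRing k] [CommRing A] [IsDomain A]
    [Algebra k A] (f g : A) (hf : f ≠ 0) :
    ∃ L : LieSubalgebra k (Derivation k A A),
      ∀ D : Derivation k A A, D ∈ L ↔ f * D g = g * D f := by
  refine ⟨{ carrier := {D | f * D g = g * D f}
            add_mem' := ?_
            zero_mem' := by simp
            smul_mem' := ?_
            lie_mem' := ?_ }, fun D => Iff.rfl⟩
  · intro R S hR hS
    simp only [Set.mem_setOf_eq, Derivation.add_apply] at *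
    linear_combination hR + hS
  · intro c D hD
    simp only [Set.mem_setOf_eq, Derivation.smul_apply] at *
    rw [mul_smul_comm, mul_smul_comm, hD]
  · intro R S hR hS
    simp only [Set.mem_setOf_eq, Derivation.commutator_apply] at *
    -- key: S f * R g = R f * S g
    have key : S f * R g = R f * S g := by
      have h : f * (S f * R g) = f * (R f * S g) := by
        calc f * (S f * R g) = S f * (f * R g) := by ring
          _ = S f * (g * R f) := by rw [hR]
          _ = R f * (g * S f) := by ring
          _ = R f * (f * S g) := by rw [hS]
          _ = f * (R f * S g) := by ring
      exact mul_left_cancel₀ hf h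
    have h2 : f * (f * (R (S g) - S (R g))) = f * (g * (R (S f) - S (R f))) := by
      have e1 : f * R (S g) = g * R (S f) + S f * R g - S g * R f := by
        have := congrArg R hS
        simp only [Derivation.leibniz, smul_eq_mul] at this
        linear_combination this
      have e2 : f * S (R g) = g * S (R f) + R f * S g - R g * S f := by
        have := congrArg S hR
        simp only [Derivation.leibniz, smul_eq_mul] at this
        linear_combination this
      linear_combination f * e1 - f * e2 + 2 * f * key
    exact mul_left_cancel₀ hf h2
end

section
/- Let A be a commutative ring that is an integral domain and an algebra over a commutative ring k, let f, g ∈ A with f ≠ 0, and let (D_i)_{i ∈ I} be a family of k-linear derivations of A such that f·D_i(g) = g·D_i(f) for every i ∈ I. Then every derivation T belonging to the Lie subalgebra of derivations of A generated by the family (D_i)_{i ∈ I} (i.e., to the smallest subset containing all D_i and closed under k-linear combinations and iterated commutator brackets) also satisfies f·T(g) = g·T(f). -/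
/-- Let `A` be a commutative integral domain that is an algebra over a commutative
ring `k`, let `f g : A` with `f ≠ 0`, and let `(D i)_{i ∈ I}` be a family of
`k`-linear derivations of `A` such that `f·(D i)(g) = g·(D i)(f)` for every `i`.
Then every derivation `T` in the Lie subalgebra generated by the family `(D i)`
also satisfies `f·T(g) = g·T(f)`. -/
theorem wronskian_lieSpan (k A : Type*) [CommRing k] [CommRing A] [IsDomain A]
    [Algebra k A] (f g : A) (hf : f ≠ 0) {I : Type*} (D : I → Derivation k A A)
    (hD : ∀ i, f * D i g = g * D i f) (T : Derivation k A A)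
    (hT : T ∈ LieSubalgebra.lieSpan k (Derivation k A A) (Set.range D)) :
    f * T g = g * T f := by
  let K : LieSubalgebra k (Derivation k A A) :=
  { carrier := {T | f * T g = g * T f}
    add_mem' := by
      intro a b ha hb
      simp only [Set.mem_setOf_eq, Derivation.add_apply] at *
      ring_nf
      linear_combination ha + hb
    zero_mem' := by simp
    smul_mem' := by
      intro c a ha
      simp only [Set.mem_setOf_eq, Derivation.smul_apply] at *
      rw [mul_smul_comm, mul_smul_comm, ha]
    lie_mem' := by
      intro R S hR hS
      simp only [Set.mem_setOf_eq, Derivation.commutator_apply] at *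
      -- cross Wronskian identity
      have hcross : R g * S f = S g * R f := by
        have h1 : f * (R g * S f) = f * (S g * R f) := by
          linear_combination S f * hR - R f * hS
        exact mul_left_cancel₀ hf h1
      have h2 := congrArg (fun x => S x) hR
      have h3 := congrArg (fun x => R x) hS
      simp only [Derivation.leibniz, smul_eq_mul] at h2 h3
      -- h2 : S f * R g + f * S (R g) = S g * R f + g * S (R f)  (roughly)
      linear_combination h3 - h2 + 2 * hcross }
  have : Set.range D ⊆ K := by rintro _ ⟨i, rfl⟩; exact hD i
  exact LieSubalgebra.lieSpan_le.mpr this hT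
end

section
/- Let N ≥ 1 and let f and g be nonzero formal power series in the N variables x₁, …, x_N over ℂ such that f·∂ᵢg = g·∂ᵢf for every i = 1, …, N, where ∂ᵢ denotes the formal partial derivative with respect to xᵢ. Write f = F·x^α + (higher terms) and g = G·x^β + (higher terms), where x^α and x^β are the lowest monomials of f and g respectively with respect to the graded lexicographic order on multi-indices and F, G ∈ ℂ are nonzero. Then α = β; that is, the minimal elements of the supports of f and g with respect to the graded lexicographic order coincide. -/
/-- The formal partial derivative `∂ᵢ` of a multivariate formal power series:
the coefficient of `x^α` in `∂ᵢ f` is `(αᵢ + 1) · (coefficient of `x^(α + 1ᵢ)` in `f`)`. -/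
noncomputable def mvPderiv {N : ℕ} (i : Fin N) (f : MvPowerSeries (Fin N) ℂ) :
    MvPowerSeries (Fin N) ℂ :=
  fun α => ((α i : ℂ) + 1) * MvPowerSeries.coeff (α + Finsupp.single i 1) f

/-- The graded lexicographic order on multi-indices: compare first by total degree,
then lexicographically. -/
def grlexLE {N : ℕ} (α β : Fin N →₀ ℕ) : Prop :=
  (α.sum fun _ n => n) < (β.sum fun _ n => n) ∨
    ((α.sum fun _ n => n) = (β.sum fun _ n => n) ∧ toLex α ≤ toLex β)

lemma grlex_add_eq {N : ℕ} {α a β b : Fin N →₀ ℕ} (h1 : grlexLE α a) (h2 : grlexLE β b)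
    (hab : a + b = α + β) : a = α ∧ b = β := by
  have hdeg : ∀ x y : Fin N →₀ ℕ,
      ((x + y).sum fun _ n => n) = (x.sum fun _ n => n) + (y.sum fun _ n => n) := fun x y =>
    Finsupp.sum_add_index' (fun _ => rfl) (fun _ _ _ => rfl)
  have hsum : (a.sum fun _ n => n) + (b.sum fun _ n => n)
      = (α.sum fun _ n => n) + (β.sum fun _ n => n) := by
    rw [← hdeg, ← hdeg, hab]
  have h1' : (α.sum fun _ n => n) ≤ (a.sum fun _ n => n) := by
    rcases h1 with h | ⟨h, _⟩ <;> omega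
  have h2' : (β.sum fun _ n => n) ≤ (b.sum fun _ n => n) := by
    rcases h2 with h | ⟨h, _⟩ <;> omega
  have l1 : toLex α ≤ toLex a := by
    rcases h1 with h | ⟨_, h⟩
    · omega
    · exact h
  have l2 : toLex β ≤ toLex b := by
    rcases h2 with h | ⟨_, h⟩
    · omega
    · exact h
  have hLex : toLex a + toLex b = toLex α + toLex β := congrArg toLex hab
  have ea : toLex a = toLex α := by
    by_contra hne
    have hlt : toLex α < toLex a := lt_of_le_of_ne l1 (Ne.symm hne)
    have : toLex α + toLex β < toLex a + toLex b := add_lt_add_of_lt_of_le hlt l2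
    exact absurd hLex (ne_of_gt this)
  have ha : a = α := ea
  refine ⟨ha, ?_⟩
  have := hab
  rw [ha] at this
  exact add_left_cancel this

lemma coeff_mul_pderiv {N : ℕ} (i : Fin N) (f g : MvPowerSeries (Fin N) ℂ)
    (α β : Fin N →₀ ℕ)
    (hαmin : ∀ γ, MvPowerSeries.coeff γ f ≠ 0 → grlexLE α γ)
    (hβmin : ∀ γ, MvPowerSeries.coeff γ g ≠ 0 → grlexLE β γ)
    (μ : Fin N →₀ ℕ) (hμ : μ + Finsupp.single i 1 = α + β) :
    MvPowerSeries.coeff μ (f * mvPderiv i g)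
      = MvPowerSeries.coeff α f * ((β i : ℂ) * MvPowerSeries.coeff β g) := by
  rw [MvPowerSeries.coeff_mul]
  have hcoeffD : ∀ p : Fin N →₀ ℕ, MvPowerSeries.coeff p (mvPderiv i g)
      = ((p i : ℂ) + 1) * MvPowerSeries.coeff (p + Finsupp.single i 1) g := fun _ => rfl
  have huniq : ∀ p : (Fin N →₀ ℕ) × (Fin N →₀ ℕ), p ∈ Finset.HasAntidiagonal.antidiagonal μ →
      MvPowerSeries.coeff p.1 f ≠ 0 →
      MvPowerSeries.coeff (p.2 + Finsupp.single i 1) g ≠ 0 →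
      p.1 = α ∧ p.2 + Finsupp.single i 1 = β := by
    intro p hp hf1 hg1
    rw [Finset.HasAntidiagonal.mem_antidiagonal] at hp
    have hadd : p.1 + (p.2 + Finsupp.single i 1) = α + β := by
      rw [← add_assoc, hp, hμ]
    exact grlex_add_eq (hαmin _ hf1) (hβmin _ hg1) hadd
  by_cases hβi : β i = 0
  · rw [hβi]
    simp only [Nat.cast_zero, zero_mul, mul_zero]
    apply Finset.sum_eq_zero
    intro p hp
    rw [hcoeffD]
    by_contra hne
    have hf1 : MvPowerSeries.coeff p.1 f ≠ 0 := fun h => hne (by rw [h]; ring)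
    have hg1 : MvPowerSeries.coeff (p.2 + Finsupp.single i 1) g ≠ 0 := fun h => hne (by rw [h]; ring)
    have h2 := (huniq p hp hf1 hg1).2
    have := congrArg (fun x : Fin N →₀ ℕ => x i) h2
    simp [Finsupp.single_apply, hβi] at this
  · have hle : Finsupp.single i 1 ≤ β := by
      rw [Finsupp.single_le_iff]
      omega
    have hcan : (β - Finsupp.single i 1) + Finsupp.single i 1 = β := tsub_add_cancel_of_le hle
    have hmem : (α, β - Finsupp.single i 1) ∈ Finset.HasAntidiagonal.antidiagonal μ := by
      rw [Finset.HasAntidiagonal.mem_antidiagonal]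
      have : α + (β - Finsupp.single i 1) + Finsupp.single i 1 = μ + Finsupp.single i 1 := by
        rw [add_assoc, hcan, hμ]
      exact add_right_cancel this
    rw [Finset.sum_eq_single (α, β - Finsupp.single i 1)]
    · rw [hcoeffD, hcan]
      congr 1
      congr 1
      have h1 : (β - Finsupp.single i 1 : Fin N →₀ ℕ) i = β i - 1 := by
        rw [Finsupp.tsub_apply, Finsupp.single_apply]
        simp
      rw [h1]
      have : ((β i - 1 : ℕ) : ℂ) = (β i : ℂ) - 1 := by
        push_cast [Nat.cast_sub (by omega : 1 ≤ β i)]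
        ring
      rw [this]
      ring
    · intro p hp hne
      rw [hcoeffD]
      by_contra hne0
      have hf1 : MvPowerSeries.coeff p.1 f ≠ 0 := fun h => hne0 (by rw [h]; ring)
      have hg1 : MvPowerSeries.coeff (p.2 + Finsupp.single i 1) g ≠ 0 :=
        fun h => hne0 (by rw [h]; ring)
      obtain ⟨h1, h2⟩ := huniq p hp hf1 hg1
      apply hne
      have h2' : p.2 = β - Finsupp.single i 1 := by
        have := congrArg (· - Finsupp.single i 1) h2
        simpa using this
      exact Prod.ext h1 h2'
    · intro hmem'
      exact absurd hmem hmem'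

/-- Let `N ≥ 1` and let `f`, `g` be nonzero formal power series in `N` variables over
`ℂ` with `f·∂ᵢg = g·∂ᵢf` for every `i`. If `α` (resp. `β`) is the minimal element of
the support of `f` (resp. of `g`) with respect to the graded lexicographic order,
then `α = β`. -/
theorem mvPowerSeries_wronskian_lowest_monomials_eq
    {N : ℕ} (hN : 1 ≤ N) (f g : MvPowerSeries (Fin N) ℂ) (hf : f ≠ 0) (hg : g ≠ 0)
    (h : ∀ i : Fin N, f * mvPderiv i g = g * mvPderiv i f)
    (α β : Fin N →₀ ℕ)
    (hα : MvPowerSeries.coeff α f ≠ 0)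
    (hαmin : ∀ γ, MvPowerSeries.coeff γ f ≠ 0 → grlexLE α γ)
    (hβ : MvPowerSeries.coeff β g ≠ 0)
    (hβmin : ∀ γ, MvPowerSeries.coeff γ g ≠ 0 → grlexLE β γ) :
    α = β := by
  ext i
  by_cases h0 : α i = 0 ∧ β i = 0
  · omega
  · have hpos : 1 ≤ (α + β) i := by
      simp only [Finsupp.add_apply]
      omega
    have hle : Finsupp.single i 1 ≤ α + β := by
      rw [Finsupp.single_le_iff]; exact hpos
    set μ := α + β - Finsupp.single i 1 with hμdef
    have hμ : μ + Finsupp.single i 1 = α + β := tsub_add_cancel_of_le hle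
    have e1 := coeff_mul_pderiv i f g α β hαmin hβmin μ hμ
    have e2 := coeff_mul_pderiv i g f β α hβmin hαmin μ (by rw [hμ, add_comm])
    rw [h i] at e1
    rw [e2] at e1
    have hFG : MvPowerSeries.coeff α f * MvPowerSeries.coeff β g ≠ 0 :=
      mul_ne_zero hα hβ
    have key : (β i : ℂ) * (MvPowerSeries.coeff α f * MvPowerSeries.coeff β g)
        = (α i : ℂ) * (MvPowerSeries.coeff α f * MvPowerSeries.coeff β g) := by
      linear_combination -e1
    have : (β i : ℂ) = (α i : ℂ) := mul_right_cancel₀ hFG key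
    exact_mod_cast this.symm
end
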